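/- Q(p) → ∞ as p → 1⁺ and Q(p) → 0 as p → ∞, where Q(p) = ∫_p^∞ (−V'(v)/v) dv and V(p) = p·ln(p²/(p²−1)). Hence there exists a unique p* > 1 with Q(p*) = 1. -/

import Mathlib

open Real Set MeasureTheory Filter
open scoped Topology

noncomputable def V (p : ℝ) : ℝ := p * Real.log (p ^ 2 / (p ^ 2 - 1))

noncomputable def Q (p : ℝ) : ℝ := ∫ v in Set.Ioi p, -(deriv V v) / v

noncomputable def hh (v : ℝ) : ℝ := (2 / (v ^ 2 - 1) - Real.log (v ^ 2 / (v ^ 2 - 1))) / v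

lemma hasDerivAt_V {v : ℝ} (hv : 1 < v) :
    HasDerivAt V (Real.log (v ^ 2 / (v ^ 2 - 1)) - 2 / (v ^ 2 - 1)) v := by
  have hv0 : (0:ℝ) < v := by linarith
  have h1 : 0 < v ^ 2 - 1 := by nlinarith
  have h1' : v ^ 2 - 1 ≠ 0 := ne_of_gt h1
  have h2 : (v:ℝ) ^ 2 ≠ 0 := by positivity
  have hA : v ^ 2 / (v ^ 2 - 1) ≠ 0 := div_ne_zero h2 h1'
  have hd : HasDerivAt (fun p : ℝ => p ^ 2 / (p ^ 2 - 1))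
      ((2 * v * (v ^ 2 - 1) - v ^ 2 * (2 * v)) / (v ^ 2 - 1) ^ 2) v := by
    have hu : HasDerivAt (fun p : ℝ => p ^ 2) (2 * v) v := by
      simpa using hasDerivAt_pow 2 v
    have hw : HasDerivAt (fun p : ℝ => p ^ 2 - 1) (2 * v) v := hu.sub_const 1
    exact hu.div hw h1'
  have hlog : HasDerivAt (fun p : ℝ => Real.log (p ^ 2 / (p ^ 2 - 1)))
      ((2 * v * (v ^ 2 - 1) - v ^ 2 * (2 * v)) / (v ^ 2 - 1) ^ 2 / (v ^ 2 / (v ^ 2 - 1))) v :=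
    hd.log hA
  have hmul := (hasDerivAt_id v).mul hlog
  have : HasDerivAt V
      (1 * Real.log (v ^ 2 / (v ^ 2 - 1)) +
        v * ((2 * v * (v ^ 2 - 1) - v ^ 2 * (2 * v)) / (v ^ 2 - 1) ^ 2 / (v ^ 2 / (v ^ 2 - 1)))) v := by
    exact hmul
  convert this using 1
  field_simp
  ring

lemma deriv_V_eq {v : ℝ} (hv : 1 < v) : -(deriv V v) / v = hh v := by
  rw [(hasDerivAt_V hv).deriv, hh]
  ring

lemma hh_contOn : ContinuousOn hh (Ioi 1) := by
  intro v hv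
  have hv1 : (1:ℝ) < v := hv
  have hv0 : v ≠ 0 := by positivity
  have h1' : v ^ 2 - 1 ≠ 0 := by nlinarith
  have h2 : (v:ℝ) ^ 2 ≠ 0 := by positivity
  have hA : v ^ 2 / (v ^ 2 - 1) ≠ 0 := div_ne_zero h2 h1'
  have c1 : ContinuousAt (fun p : ℝ => p ^ 2 / (p ^ 2 - 1)) v :=
    ContinuousAt.div (by fun_prop) (by fun_prop) h1'
  have c2 : ContinuousAt (fun p : ℝ => 2 / (p ^ 2 - 1)) v :=
    continuousAt_const.div (by fun_prop) h1'
  have c3 : ContinuousAt (fun p : ℝ => Real.log (p ^ 2 / (p ^ 2 - 1))) v := c1.log hA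
  exact (((c2.sub c3).div continuousAt_id hv0)).continuousWithinAt

lemma log_le_aux {v : ℝ} (hv : 1 < v) :
    Real.log (v ^ 2 / (v ^ 2 - 1)) ≤ 1 / (v ^ 2 - 1) := by
  have h1 : 0 < v ^ 2 - 1 := by nlinarith
  have hx : 0 < v ^ 2 / (v ^ 2 - 1) := by positivity
  have := Real.log_le_sub_one_of_pos hx
  have heq : v ^ 2 / (v ^ 2 - 1) - 1 = 1 / (v ^ 2 - 1) := by field_simp; ring
  linarith [heq ▸ this]

lemma hh_pos {v : ℝ} (hv : 1 < v) : 0 < hh v := by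
  have h1 : 0 < v ^ 2 - 1 := by nlinarith
  have hv0 : (0:ℝ) < v := by linarith
  have hlog := log_le_aux hv
  have h2 : 1 / (v ^ 2 - 1) < 2 / (v ^ 2 - 1) := by
    rw [div_lt_div_iff₀ h1 h1]; nlinarith
  exact div_pos (by linarith) hv0

lemma hh_nonneg {v : ℝ} (hv : 1 < v) : 0 ≤ hh v := (hh_pos hv).le

lemma hh_integrableOn {p : ℝ} (hp : 1 < p) : IntegrableOn hh (Ioi p) := by
  have h0 : (0:ℝ) < p := by linarith
  have hp2 : 0 < p ^ 2 - 1 := by nlinarith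
  have hint : Integrable (fun v : ℝ => (2 * p ^ 2 / (p ^ 2 - 1)) * v ^ (-3 : ℝ))
      (volume.restrict (Ioi p)) :=
    (integrableOn_Ioi_rpow_of_lt (by norm_num) h0).const_mul _
  refine Integrable.mono hint
    ((hh_contOn.mono (fun x hx => lt_trans hp hx)).aestronglyMeasurable measurableSet_Ioi) ?_
  filter_upwards [ae_restrict_mem measurableSet_Ioi] with v hv
  have hvp : p < v := hv
  have hv1 : (1:ℝ) < v := lt_trans hp hvp
  have hv0 : (0:ℝ) < v := by linarith
  have h1 : 0 < v ^ 2 - 1 := by nlinarith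
  have hrw : v ^ (-3 : ℝ) = (v ^ 3)⁻¹ := by
    rw [show (-3 : ℝ) = -(3:ℕ) by norm_num, Real.rpow_neg hv0.le, Real.rpow_natCast]
  have hlogpos : 0 < Real.log (v ^ 2 / (v ^ 2 - 1)) := by
    apply Real.log_pos
    rw [lt_div_iff₀ h1]; nlinarith
  have hupper : hh v ≤ 2 * p ^ 2 / (p ^ 2 - 1) * (v ^ 3)⁻¹ := by
    have step1 : hh v ≤ 2 / (v ^ 2 - 1) / v := by
      rw [hh, div_le_div_iff₀ hv0 hv0]
      nlinarith [hlogpos]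
    refine step1.trans ?_
    have hrhs : 2 * p ^ 2 / (p ^ 2 - 1) * (v ^ 3)⁻¹ = (2 * p ^ 2) / ((p ^ 2 - 1) * v ^ 3) := by
      field_simp
    rw [div_div, hrhs, div_le_div_iff₀ (by positivity) (by positivity)]
    have hpv : p ^ 2 ≤ v ^ 2 := by nlinarith
    nlinarith [mul_nonneg hv0.le (sub_nonneg.mpr hpv), mul_pos hv0 hv0]
  rw [hrw]
  rw [Real.norm_eq_abs, Real.norm_eq_abs, abs_of_nonneg (hh_nonneg hv1),
    abs_of_nonneg (by positivity)]
  exact hupper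

lemma Q_eq {p : ℝ} (hp : 1 < p) : Q p = ∫ v in Ioi p, hh v :=
  setIntegral_congr_fun measurableSet_Ioi (fun v hv => deriv_V_eq (lt_trans hp hv))

lemma Q_nonneg {p : ℝ} (hp : 1 < p) : 0 ≤ Q p := by
  rw [Q_eq hp]
  exact setIntegral_nonneg measurableSet_Ioi (fun v hv => hh_nonneg (lt_trans hp hv))

lemma Q_split {a b : ℝ} (ha : 1 < a) (hab : a ≤ b) :
    Q a = (∫ v in Ioc a b, hh v) + Q b := by
  have hb : 1 < b := lt_of_lt_of_le ha hab
  rw [Q_eq ha, Q_eq hb, ← setIntegral_union Ioc_disjoint_Ioi_same measurableSet_Ioi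
    ((hh_integrableOn ha).mono_set Ioc_subset_Ioi_self) (hh_integrableOn hb),
    Ioc_union_Ioi_eq_Ioi hab]

lemma hh_intervalIntegrable {a b : ℝ} (ha : 1 < a) (hab : a ≤ b) :
    IntervalIntegrable hh volume a b := by
  rw [intervalIntegrable_iff_integrableOn_Ioc_of_le hab]
  exact (hh_integrableOn ha).mono_set Ioc_subset_Ioi_self

lemma Q_strictAntiOn : StrictAntiOn Q (Ioi 1) := by
  intro x hx y hy hxy
  have hx1 : (1:ℝ) < x := hx
  have := Q_split hx1 hxy.le
  have hpos : 0 < ∫ v in Ioc x y, hh v := by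
    rw [← intervalIntegral.integral_of_le hxy.le]
    exact intervalIntegral.intervalIntegral_pos_of_pos_on
      (hh_intervalIntegrable hx1 hxy.le)
      (fun v hv => hh_pos (lt_trans hx1 hv.1)) hxy
  linarith

lemma Q_contOn {a b : ℝ} (ha : 1 < a) : ContinuousOn Q (Icc a b) := by
  have hint : IntegrableOn hh (Icc a b) := by
    rw [integrableOn_Icc_iff_integrableOn_Ioc]
    exact (hh_integrableOn ha).mono_set Ioc_subset_Ioi_self
  have hcont : ContinuousOn (fun p => Q a - ∫ t in Ioc a p, hh t) (Icc a b) :=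
    continuousOn_const.sub (intervalIntegral.continuousOn_primitive hint)
  refine ContinuousOn.congr hcont ?_
  intro p hp
  have := Q_split ha hp.1
  simp only
  linarith

theorem stmt_14 :
    Filter.Tendsto Q (nhdsWithin 1 (Set.Ioi 1)) Filter.atTop ∧
    Filter.Tendsto Q Filter.atTop (nhds 0) ∧
    (∃! p : ℝ, 1 < p ∧ Q p = 1) := by
  -- limit at infinity
  have htop : Filter.Tendsto Q Filter.atTop (nhds 0) := by
    have h2 : (1:ℝ) < 2 := one_lt_two
    have hten : Tendsto (fun p : ℝ => ∫ v in (2:ℝ)..p, hh v) atTop (𝓝 (Q 2)) := by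
      rw [Q_eq h2]
      exact intervalIntegral_tendsto_integral_Ioi 2 (hh_integrableOn h2) tendsto_id
    have : Tendsto (fun p : ℝ => Q 2 - ∫ v in (2:ℝ)..p, hh v) atTop (𝓝 (Q 2 - Q 2)) :=
      tendsto_const_nhds.sub hten
    rw [sub_self] at this
    refine Tendsto.congr' ?_ this
    filter_upwards [eventually_ge_atTop (2:ℝ)] with p hp
    have := Q_split h2 hp
    rw [intervalIntegral.integral_of_le hp]
    linarith
  -- limit at 1+
  have hone : Filter.Tendsto Q (nhdsWithin 1 (Set.Ioi 1)) Filter.atTop := by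
    have hb : Tendsto (fun p : ℝ => (1/6 : ℝ) * Real.log (1 / (p - 1)))
        (nhdsWithin 1 (Set.Ioi 1)) atTop := by
      have h1 : Tendsto (fun p : ℝ => p - 1) (nhdsWithin 1 (Set.Ioi 1)) (nhdsWithin 0 (Set.Ioi 0)) := by
        apply tendsto_nhdsWithin_of_tendsto_nhds_of_eventually_within
        · have : Tendsto (fun p : ℝ => p - 1) (nhds 1) (nhds 0) := by
            have := (continuous_sub_right (1:ℝ)).tendsto 1
            simpa using this
          exact this.mono_left nhdsWithin_le_nhds
        · filter_upwards [self_mem_nhdsWithin] with p hp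
          simpa using hp
      have h2 : Tendsto (fun p : ℝ => Real.log (p - 1)) (nhdsWithin 1 (Set.Ioi 1)) atBot :=
        Real.tendsto_log_nhdsGT_zero.comp h1
      have h3 : Tendsto (fun p : ℝ => -Real.log (p - 1)) (nhdsWithin 1 (Set.Ioi 1)) atTop :=
        tendsto_neg_atBot_atTop.comp h2
      have h4 : Tendsto (fun p : ℝ => (1/6 : ℝ) * -Real.log (p - 1))
          (nhdsWithin 1 (Set.Ioi 1)) atTop := h3.const_mul_atTop (by norm_num)
      refine h4.congr fun p => ?_
      rw [show (1:ℝ)/(p-1) = (p-1)⁻¹ from one_div _, Real.log_inv]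
    refine tendsto_atTop_mono' _ ?_ hb
    filter_upwards [Ioo_mem_nhdsGT_of_mem (left_mem_Ico.mpr one_lt_two)] with p hp
    obtain ⟨hp1, hp2⟩ := hp
    -- Q p ≥ ∫ p..2 hh ≥ ∫ p..2 (1/6)*(1/(v-1)) = (1/6) log (1/(p-1))
    have hsplit := Q_split hp1 hp2.le
    have htail : 0 ≤ Q 2 := Q_nonneg one_lt_two
    have hIoc : (∫ v in Ioc p 2, hh v) = ∫ v in p..2, hh v :=
      (intervalIntegral.integral_of_le hp2.le).symm
    have hmono : (∫ v in p..2, (1/6 : ℝ) * (1 / (v - 1))) ≤ ∫ v in p..2, hh v := by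
      apply intervalIntegral.integral_mono_on hp2.le
      · apply ContinuousOn.intervalIntegrable
        apply ContinuousOn.mul continuousOn_const
        apply ContinuousOn.div continuousOn_const (by fun_prop)
        intro x hx
        rw [uIcc_of_le hp2.le] at hx
        have : 1 < x := lt_of_lt_of_le hp1 hx.1
        intro h
        have : x = 1 := by linarith [sub_eq_zero.mp h]
        linarith
      · exact hh_intervalIntegrable hp1 hp2.le
      · intro v hv
        have hv1 : 1 < v := lt_of_lt_of_le hp1 hv.1
        have h1 : 0 < v ^ 2 - 1 := by nlinarith
        have hv0 : (0:ℝ) < v := by linarith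
        have hlow : 1 / (v ^ 2 - 1) / v ≤ hh v := by
          rw [hh, div_le_div_iff₀ hv0 hv0]
          have hl := log_le_aux hv1
          have key : (2 / (v ^ 2 - 1) - Real.log (v ^ 2 / (v ^ 2 - 1))) * v
              - 1 / (v ^ 2 - 1) * v
              = (1 / (v ^ 2 - 1) - Real.log (v ^ 2 / (v ^ 2 - 1))) * v := by ring
          linarith [key, mul_nonneg (sub_nonneg.mpr hl) hv0.le]
        refine le_trans ?_ hlow
        rw [div_div, mul_one_div, div_le_div_iff₀ (by linarith) (by positivity)]
        have hv2 : v ≤ 2 := hv.2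
        have k1 : (0:ℝ) ≤ v - 1 := by linarith
        have k2 : v * (v + 1) ≤ 6 := by nlinarith
        nlinarith [mul_nonneg k1 (by linarith : (0:ℝ) ≤ 6 - v * (v + 1))]
    have hcomp : (∫ v in p..2, (1/6 : ℝ) * (1 / (v - 1))) = (1/6 : ℝ) * Real.log (1 / (p - 1)) := by
      rw [intervalIntegral.integral_const_mul]
      congr 1
      have hsub : (∫ v in p..2, 1 / (v - 1)) = ∫ x in (p-1)..(2-1), 1 / x :=
        intervalIntegral.integral_comp_sub_right (fun x => 1 / x) 1
      have h0 : (0:ℝ) ∉ Set.uIcc (p - 1) (2 - 1) := by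
        rw [uIcc_of_le (by linarith : p - 1 ≤ 2 - 1)]
        intro h
        have := h.1
        linarith
      rw [hsub, integral_one_div h0]
      norm_num
    linarith [hcomp ▸ hmono, hIoc ▸ hsplit]
  refine ⟨hone, htop, ?_⟩
  -- existence
  obtain ⟨a, ha1, haQ⟩ : ∃ a, 1 < a ∧ 1 < Q a := by
    have := (hone.eventually (eventually_gt_atTop (1:ℝ))).and self_mem_nhdsWithin
    rcases this.exists with ⟨a, hQ, ha⟩
    exact ⟨a, ha, hQ⟩
  obtain ⟨b, hab, hbQ⟩ : ∃ b, a ≤ b ∧ Q b < 1 := by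
    have h1 : ∀ᶠ b in atTop, Q b < 1 := by
      have := htop.eventually (eventually_lt_nhds (by norm_num : (0:ℝ) < 1))
      simpa using this
    rcases (h1.and (eventually_ge_atTop a)).exists with ⟨b, hQ, hb⟩
    exact ⟨b, hb, hQ⟩
  have hmem : (1:ℝ) ∈ Icc (Q b) (Q a) := ⟨hbQ.le, haQ.le⟩
  obtain ⟨p, hp, hQp⟩ := intermediate_value_Icc' hab (Q_contOn ha1) hmem
  have hp1 : 1 < p := lt_of_lt_of_le ha1 hp.1
  refine ⟨p, ⟨hp1, hQp⟩, ?_⟩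
  rintro q ⟨hq1, hQq⟩
  by_contra hne
  rcases lt_or_gt_of_ne hne with h | h
  · have := Q_strictAntiOn hq1 hp1 h
    rw [hQp, hQq] at this
    exact lt_irrefl _ this
  · have := Q_strictAntiOn hp1 hq1 h
    rw [hQp, hQq] at this
    exact lt_irrefl _ this
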